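/- arXiv:2505.08560 — 5 statements merged into one kernel-verified Lean document; each statement's English description precedes it below -/
import Mathlib

section
/- Fix an integer n ≥ 2. For every ε > 0, there is no constant C > 0 such that F(a) ≤ C·(a1·an)^(1-ε) holds for all vectors a = (a1,...,an) of positive integers with gcd(a1,...,an) = 1 and a1 ≤ a2 ≤ ... ≤ an. -/
open Filter

/-- Representability by the vector `(k, k+1, …, k+1)` of length `m+2` is the same as
representability by the pair `{k, k+1}`. -/
lemma repr_iff (m k : ℕ) (b : ℕ) :
    (∃ z : Fin (m + 2) → ℕ, b = ∑ i : Fin (m + 2), (if (i : ℕ) = 0 then k else k + 1) * z i) ↔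
      ∃ x y : ℕ, b = k * x + (k + 1) * y := by
  constructor
  · rintro ⟨z, rfl⟩
    refine ⟨z 0, ∑ i : Fin (m + 1), z i.succ, ?_⟩
    rw [Fin.sum_univ_succ, Finset.mul_sum]
    simp [Fin.val_succ]
  · rintro ⟨x, y, rfl⟩
    refine ⟨fun i => if (i : ℕ) = 0 then x else if (i : ℕ) = 1 then y else 0, ?_⟩
    rw [Fin.sum_univ_succ, Fin.sum_univ_succ]
    simp [Fin.val_succ]

lemma frob_family (m k : ℕ) (hk : 2 ≤ k) :
    IsGreatest {b : ℕ | ¬ ∃ z : Fin (m + 2) → ℕ,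
        b = ∑ i : Fin (m + 2), (if (i : ℕ) = 0 then k else k + 1) * z i}
      (k * (k + 1) - k - (k + 1)) := by
  have cop : Nat.Coprime k (k + 1) := by simp
  have h := frobeniusNumber_pair cop (by omega) (by omega)
  rw [FrobeniusNumber] at h
  have hset : {b : ℕ | ¬ ∃ z : Fin (m + 2) → ℕ,
      b = ∑ i : Fin (m + 2), (if (i : ℕ) = 0 then k else k + 1) * z i} =
      {b : ℕ | b ∉ AddSubmonoid.closure ({k, k + 1} : Set ℕ)} := by
    ext b
    simp only [Set.mem_setOf_eq, AddSubmonoid.mem_closure_pair, repr_iff, smul_eq_mul]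
    constructor
    · rintro h ⟨x, y, hxy⟩; exact h ⟨x, y, by rw [← hxy]; ring⟩
    · rintro h ⟨x, y, hxy⟩; exact h ⟨x, y, by rw [hxy]; ring⟩
  rw [hset]
  exact h

/-- For fixed `n ≥ 2` and any `ε > 0`, there is no constant `C > 0` such that
`F(a) ≤ C·(a1·an)^(1-ε)` for all positive integral vectors `a1 ≤ ⋯ ≤ an` with gcd 1. -/
theorem no_subquadratic_bound (n : ℕ) (hn : 2 ≤ n) (ε : ℝ) (hε : 0 < ε) :
    ¬ ∃ C : ℝ, 0 < C ∧
      ∀ a : Fin n → ℕ, (∀ i, 0 < a i) → Monotone a → Finset.univ.gcd a = 1 →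
        ∀ F : ℕ, IsGreatest {b : ℕ | ¬ ∃ z : Fin n → ℕ, b = ∑ i, a i * z i} F →
          (F : ℝ) ≤ C * ((a ⟨0, by omega⟩ : ℝ) * (a ⟨n - 1, by omega⟩ : ℝ)) ^ ((1 : ℝ) - ε) := by
  obtain ⟨m, rfl⟩ : ∃ m, n = m + 2 := ⟨n - 2, by omega⟩
  rintro ⟨C, hC, hbound⟩
  -- choose k with k ≥ 3 and k^(2ε) > 4C
  have htend : Tendsto (fun j : ℕ => (j : ℝ) ^ (2 * ε)) atTop atTop :=
    (tendsto_rpow_atTop (by linarith)).comp tendsto_natCast_atTop_atTop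
  obtain ⟨k, hk3, hkC⟩ : ∃ k : ℕ, 3 ≤ k ∧ 4 * C < (k : ℝ) ^ (2 * ε) := by
    obtain ⟨N, hN⟩ := (htend.eventually_gt_atTop (4 * C)).exists_forall_of_atTop
    exact ⟨max N 3, le_max_right _ _, hN _ (le_max_left _ _)⟩
  set a : Fin (m + 2) → ℕ := fun i => if (i : ℕ) = 0 then k else k + 1 with ha
  have hpos : ∀ i, 0 < a i := by intro i; simp only [ha]; split <;> omega
  have hmono : Monotone a := by
    intro i j hij
    simp only [ha]
    split
    · split <;> omega
    · have : (i : ℕ) ≠ 0 := by assumption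
      have : (j : ℕ) ≠ 0 := by
        have := Fin.le_iff_val_le_val.mp hij; omega
      simp [this]
  have hgcd : Finset.univ.gcd a = 1 := by
    have h0 : Finset.univ.gcd a ∣ a ⟨0, by omega⟩ := Finset.gcd_dvd (Finset.mem_univ _)
    have h1 : Finset.univ.gcd a ∣ a ⟨1, by omega⟩ := Finset.gcd_dvd (Finset.mem_univ _)
    simp only [ha] at h0 h1
    norm_num at h0 h1
    have := Nat.dvd_sub h1 h0
    simpa [ha] using this
  have hF : IsGreatest {b : ℕ | ¬ ∃ z : Fin (m + 2) → ℕ, b = ∑ i, a i * z i}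
      (k * (k + 1) - k - (k + 1)) := frob_family m k (by omega)
  have hle := hbound a hpos hmono hgcd _ hF
  -- simplify the entries
  have ha0 : a ⟨0, by omega⟩ = k := by simp [ha]
  have ha1 : a ⟨m + 2 - 1, by omega⟩ = k + 1 := by simp [ha]
  rw [ha0, ha1] at hle
  -- cast the Frobenius number
  have hcast : ((k * (k + 1) - k - (k + 1) : ℕ) : ℝ) = (k : ℝ) * (k + 1) - k - (k + 1) := by
    have h1 : k + (k + 1) ≤ k * (k + 1) := by nlinarith
    push_cast [Nat.sub_sub, h1]
    ring
  rw [hcast] at hle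
  push_cast at hle
  -- now derive a contradiction
  have hkR : (3 : ℝ) ≤ (k : ℝ) := by exact_mod_cast hk3
  set B : ℝ := (k : ℝ) * ((k : ℝ) + 1) with hB
  have hBpos : 0 < B := by nlinarith
  have hBe : B ^ ((1 : ℝ) - ε) = B / B ^ ε := by
    rw [Real.rpow_sub hBpos, Real.rpow_one]
  have hk2 : (k : ℝ) ^ (2 * ε) ≤ B ^ ε := by
    have h1 : ((k : ℝ) ^ (2 : ℕ)) ^ ε ≤ B ^ ε := by
      apply Real.rpow_le_rpow (by positivity) (by nlinarith) hε.le
    have h2 : (k : ℝ) ^ (2 * ε) = ((k : ℝ) ^ (2 : ℕ)) ^ ε := by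
      rw [← Real.rpow_natCast (k : ℝ) 2,
        ← Real.rpow_mul (by positivity : (0:ℝ) ≤ (k : ℝ))]
      norm_num
    rw [h2]
    exact h1
  have h4C : 4 * C < B ^ ε := lt_of_lt_of_le hkC hk2
  have hBepos : (0 : ℝ) < B ^ ε := by positivity
  have hdiv : B / B ^ ε < B / (4 * C) :=
    div_lt_div_of_pos_left hBpos (by linarith) h4C
  have : C * B ^ ((1 : ℝ) - ε) < C * (B / (4 * C)) := by
    rw [hBe]
    exact mul_lt_mul_of_pos_left hdiv hC
  have hCB : C * (B / (4 * C)) = B / 4 := by field_simp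
  rw [hCB] at this
  have hfinal : B / 4 < (k : ℝ) * (k + 1) - k - (k + 1) := by
    rw [hB]; nlinarith
  linarith
end

section
/- The vector a = (8, 32, 59) satisfies gcd(8,32,59) = 1 and violates Selmer's bound: F(8,32,59) = 405 > 2·59·⌊8/3⌋ − 8 = 228. Hence Selmer's upper bound F(a) ≤ 2·an·⌊a1/n⌋ − a1 fails in general under the condition gcd(a1,...,an) = 1 alone. -/
lemma rep_aux (b : ℕ) (hb : 406 ≤ b) : ∃ x z : ℕ, b = 8 * x + 59 * z := by
  induction b using Nat.strong_induction_on with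
  | _ b ih =>
    by_cases h : b < 414
    · interval_cases b
      · exact ⟨36, 2, rfl⟩
      · exact ⟨14, 5, rfl⟩
      · exact ⟨51, 0, rfl⟩
      · exact ⟨29, 3, rfl⟩
      · exact ⟨7, 6, rfl⟩
      · exact ⟨44, 1, rfl⟩
      · exact ⟨22, 4, rfl⟩
      · exact ⟨0, 7, rfl⟩
    · obtain ⟨x, z, hr⟩ := ih (b - 8) (by omega) (by omega)
      exact ⟨x + 1, z, by omega⟩

/-- The vector `(8, 32, 59)` has gcd 1, Frobenius number `405`, and violates Selmer's bound
`2·an·⌊a1/n⌋ − a1 = 228`. -/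
theorem selmer_bound_fails :
    Nat.gcd 8 (Nat.gcd 32 59) = 1 ∧
      IsGreatest {b : ℕ | ¬ ∃ x y z : ℕ, b = 8 * x + 32 * y + 59 * z} 405 ∧
      405 > 2 * 59 * (8 / 3) - 8 := by
  refine ⟨by decide, ⟨?_, ?_⟩, by norm_num⟩
  · rintro ⟨x, y, z, h⟩
    omega
  · intro b hb
    by_contra hlt
    obtain ⟨x, z, hr⟩ := rep_aux b (by omega)
    exact hb ⟨x, 0, z, by omega⟩
end

section
/- For every integer n ≥ 3, there exists a vector a = (a1,...,an) of positive integers with a1 ≤ ... ≤ an, gcd(a1,...,an) = 1, and a1 ≥ n, such that F(a) > 2·an·⌊a1/n⌋ − a1. (One such family: a = (8, 8k2, ..., 8k_{n-1}, 59) with 1 ≤ k2 ≤ ... ≤ k_{n-1} ≤ 7, for which F(a) = 405 > 228.) -/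
open Finset in
/-- For every `n ≥ 3` there is a vector of positive integers `a1 ≤ ⋯ ≤ an` with gcd 1 and
`a1 ≥ n` whose Frobenius number exceeds Selmer's bound `2·an·⌊a1/n⌋ − a1`. -/
theorem selmer_bound_fails_all_dims (n : ℕ) (hn : 3 ≤ n) :
    ∃ a : Fin n → ℕ, (∀ i, 0 < a i) ∧ Monotone a ∧ Finset.univ.gcd a = 1 ∧
      n ≤ a ⟨0, by omega⟩ ∧
      ∃ F : ℕ, IsGreatest {b : ℕ | ¬ ∃ z : Fin n → ℕ, b = ∑ i, a i * z i} F ∧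
        F > 2 * a ⟨n - 1, by omega⟩ * (a ⟨0, by omega⟩ / n) - a ⟨0, by omega⟩ := by
  have hn0 : 0 < n := by omega
  set i0 : Fin n := ⟨0, by omega⟩ with hi0
  set iL : Fin n := ⟨n - 1, by omega⟩ with hiL
  have hne : i0 ≠ iL := by
    simp only [hi0, hiL, Fin.mk.injEq, ne_eq]
    omega
  set a : Fin n → ℕ := fun i => (n + 1) + (if i = iL then 1 else 0) with ha
  have ha0 : a i0 = n + 1 := by simp [ha, hne]
  have haL : a iL = n + 2 := by simp [ha]
  -- key equivalence of representability
  have key : ∀ b : ℕ, (∃ z : Fin n → ℕ, b = ∑ i, a i * z i) ↔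
      ∃ x y : ℕ, x • (n + 1) + y • (n + 2) = b := by
    intro b
    constructor
    · rintro ⟨z, rfl⟩
      have hsum : ∑ i, a i * z i = (n + 1) * (∑ i, z i) + z iL := by
        have step : ∀ i : Fin n, a i * z i =
            (n + 1) * z i + (if i = iL then z i else 0) := by
          intro i
          simp only [ha]
          split_ifs <;> ring
        rw [Finset.sum_congr rfl fun i _ => step i, Finset.sum_add_distrib,
          ← Finset.mul_sum, Finset.sum_ite_eq' Finset.univ iL]
        simp
      have hle : z iL ≤ ∑ i, z i :=
        Finset.single_le_sum (fun i _ => Nat.zero_le _) (Finset.mem_univ iL)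
      refine ⟨(∑ i, z i) - z iL, z iL, ?_⟩
      simp only [smul_eq_mul, hsum]
      rw [Nat.sub_mul]
      have h2 : z iL * (n + 1) ≤ (∑ i, z i) * (n + 1) := Nat.mul_le_mul_right _ hle
      zify [h2, hle]
      ring
    · rintro ⟨x, y, rfl⟩
      refine ⟨fun i => (if i = i0 then x else 0) + (if i = iL then y else 0), ?_⟩
      have step : ∀ i : Fin n, a i * ((if i = i0 then x else 0) + (if i = iL then y else 0)) =
          (if i = i0 then a i0 * x else 0) + (if i = iL then a iL * y else 0) := by
        intro i
        split_ifs with h1 h2 <;> simp_all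
      rw [Finset.sum_congr rfl fun i _ => step i, Finset.sum_add_distrib,
        Finset.sum_ite_eq' Finset.univ i0, Finset.sum_ite_eq' Finset.univ iL]
      simp only [Finset.mem_univ, if_true, ha0, haL, smul_eq_mul]
      ring
  have cop : Nat.Coprime (n + 1) (n + 2) := by
    have hd : Nat.gcd (n + 1) (n + 2) ∣ 1 := by
      have h := Nat.dvd_sub (Nat.gcd_dvd_right (n + 1) (n + 2))
        (Nat.gcd_dvd_left (n + 1) (n + 2))
      simpa using h
    simpa [Nat.Coprime] using Nat.eq_one_of_dvd_one hd
  have hfrob := frobeniusNumber_pair cop (by omega) (by omega)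
  rw [FrobeniusNumber] at hfrob
  have hsetEq : {b : ℕ | ¬ ∃ z : Fin n → ℕ, b = ∑ i, a i * z i} =
      {k : ℕ | k ∉ AddSubmonoid.closure {n + 1, n + 2}} := by
    ext b
    simp only [Set.mem_setOf_eq, AddSubmonoid.mem_closure_pair, key]
  refine ⟨a, fun i => by positivity, ?_, ?_, by rw [ha0]; omega, ?_⟩
  · intro i j hij
    have hmono : (if i = iL then 1 else 0 : ℕ) ≤ (if j = iL then 1 else 0) := by
      split_ifs with h1 h2 h2
      · omega
      · exact absurd (le_antisymm (Fin.le_def.mpr (by simp [hiL]; omega)) (h1 ▸ hij)) h2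
      · omega
      · omega
    simp only [ha]
    omega
  · have h1 : Finset.univ.gcd a ∣ n + 1 := ha0 ▸ Finset.gcd_dvd (Finset.mem_univ i0)
    have h2 : Finset.univ.gcd a ∣ n + 2 := haL ▸ Finset.gcd_dvd (Finset.mem_univ iL)
    have := Nat.dvd_sub h2 h1
    simpa using this
  · refine ⟨(n + 1) * (n + 2) - (n + 1) - (n + 2), by rw [hsetEq]; exact hfrob, ?_⟩
    rw [ha0, haL]
    have hdiv : (n + 1) / n = 1 := Nat.div_eq_of_lt_le (by omega) (by omega)
    rw [hdiv]
    have hmul : (n + 1) * (n + 2) = n * n + 3 * n + 2 := by ring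
    have hsq : 3 * n ≤ n * n := Nat.mul_le_mul_right n hn
    omega
end

section
/- For positive integers a1 ≤ a2 ≤ ... ≤ an (n ≥ 2) with gcd 1, Schur's bound holds: F(a) ≤ (a1 − 1)(an − 1) − 1. -/
lemma finset_gcd_bezout {n : ℕ} (a : Fin n → ℕ) (s : Finset (Fin n)) :
    ∃ c : Fin n → ℤ, ((s.gcd a : ℕ) : ℤ) = ∑ i ∈ s, c i * a i := by
  classical
  induction s using Finset.induction_on with
  | empty => exact ⟨0, by simp⟩
  | @insert i s hi ih =>
    obtain ⟨c, hc⟩ := ih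
    refine ⟨fun j => if j = i then Nat.gcdA (a i) (s.gcd a) else Nat.gcdB (a i) (s.gcd a) * c j, ?_⟩
    rw [Finset.gcd_insert, Finset.sum_insert hi]
    beta_reduce
    rw [if_pos rfl]
    have h1 : GCDMonoid.gcd (a i) (s.gcd a) = Nat.gcd (a i) (s.gcd a) := rfl
    rw [h1, Nat.gcd_eq_gcd_ab]
    have h2 : ∑ j ∈ s, (if j = i then Nat.gcdA (a i) (s.gcd a) else Nat.gcdB (a i) (s.gcd a) * c j) * (a j : ℤ)
        = Nat.gcdB (a i) (s.gcd a) * ∑ j ∈ s, c j * a j := by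
      rw [Finset.mul_sum]
      apply Finset.sum_congr rfl
      intro j hj
      rw [if_neg (by rintro rfl; exact hi hj)]
      ring
    rw [h2, ← hc]
    ring

/-- Schur's bound: for positive integers `a1 ≤ ⋯ ≤ an` (`n ≥ 2`) with gcd 1,
`F(a) ≤ (a1 − 1)(an − 1) − 1`. -/
theorem schur_bound (n : ℕ) (hn : 2 ≤ n) (a : Fin n → ℕ)
    (ha : ∀ i, 0 < a i) (hmono : Monotone a) (hgcd : Finset.univ.gcd a = 1)
    (F : ℕ) (hF : IsGreatest {b : ℕ | ¬ ∃ z : Fin n → ℕ, b = ∑ i, a i * z i} F) :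
    F ≤ (a ⟨0, by omega⟩ - 1) * (a ⟨n - 1, by omega⟩ - 1) - 1 := by
  classical
  set i0 : Fin n := ⟨0, by omega⟩ with hi0
  set il : Fin n := ⟨n - 1, by omega⟩ with hil
  set m : ℕ := a i0 with hmdef
  set A : ℕ := a il with hAdef
  have haA : ∀ i, a i ≤ A := by
    intro i
    apply hmono
    rw [Fin.le_def]
    have := i.isLt
    simp only [hil]
    omega
  have hFrep : ¬ ∃ z : Fin n → ℕ, F = ∑ i, a i * z i := hF.1
  rcases Nat.lt_or_ge m 2 with hm1 | hm2
  · exfalso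
    apply hFrep
    have hm1' : m = 1 := by have := ha i0; omega
    refine ⟨fun i => if i = i0 then F else 0, ?_⟩
    simp only [mul_ite, mul_zero, Finset.sum_ite_eq', Finset.mem_univ, if_true]
    rw [← hmdef, hm1', one_mul]
  haveI : NeZero m := ⟨by omega⟩
  -- the sets of residues representable with at most k summands
  set S : ℕ → Finset (ZMod m) := fun k =>
    Finset.univ.filter (fun x => ∃ z : Fin n → ℕ,
      (∑ i, z i) ≤ k ∧ x = ∑ i, (a i : ZMod m) * (z i : ZMod m)) with hSdef
  have hmem : ∀ k x, x ∈ S k ↔ ∃ z : Fin n → ℕ,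
      (∑ i, z i) ≤ k ∧ x = ∑ i, (a i : ZMod m) * (z i : ZMod m) := by
    intro k x
    simp [hSdef]
  have h0 : ∀ k, (0 : ZMod m) ∈ S k := by
    intro k
    rw [hmem]
    exact ⟨0, by simp, by simp⟩
  have hSmono : ∀ k, S k ⊆ S (k + 1) := by
    intro k x hx
    rw [hmem] at hx ⊢
    obtain ⟨z, hz1, hz2⟩ := hx
    exact ⟨z, by omega, hz2⟩
  have hstep : ∀ k x (i : Fin n), x ∈ S k → x + (a i : ZMod m) ∈ S (k + 1) := by
    intro k x i hx
    rw [hmem] at hx ⊢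
    obtain ⟨z, hz1, hz2⟩ := hx
    refine ⟨fun j => z j + if j = i then 1 else 0, ?_, ?_⟩
    · simp only [Finset.sum_add_distrib, Finset.sum_ite_eq', Finset.mem_univ, if_true]
      omega
    · subst hz2
      push_cast
      simp only [mul_add, Finset.sum_add_distrib, mul_ite, mul_zero, mul_one,
        Finset.sum_ite_eq', Finset.mem_univ, if_true]
  -- Bezout coefficients
  obtain ⟨c, hc⟩ := finset_gcd_bezout a Finset.univ
  rw [hgcd] at hc
  set d : Fin n → ℕ := fun i => (c i % (m : ℤ)).toNat with hddef
  have hone : (1 : ZMod m) = ∑ i, (a i : ZMod m) * (d i : ZMod m) := by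
    have h1 := congrArg (fun t : ℤ => ((t : ℤ) : ZMod m)) hc
    push_cast at h1
    rw [h1]
    apply Finset.sum_congr rfl
    intro i _
    have h3 : (((c i % (m : ℤ)).toNat : ℕ) : ℤ) = c i % (m : ℤ) :=
      Int.toNat_of_nonneg (Int.emod_nonneg _ (by exact_mod_cast NeZero.ne m))
    have h2 : ((d i : ℕ) : ZMod m) = ((c i : ℤ) : ZMod m) := by
      rw [hddef]
      calc (((c i % (m : ℤ)).toNat : ℕ) : ZMod m)
          = ((((c i % (m : ℤ)).toNat : ℕ) : ℤ) : ZMod m) := by push_cast; rfl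
        _ = ((c i % (m : ℤ) : ℤ) : ZMod m) := by rw [h3]
        _ = ((c i : ℤ) : ZMod m) := ZMod.intCast_mod _ _
    rw [h2]
    ring
  -- closure under repeated addition
  have hmul : ∀ k, (∀ (i : Fin n) x, x ∈ S k → x + (a i : ZMod m) ∈ S k) →
      ∀ (i : Fin n) (t : ℕ) x, x ∈ S k → x + (a i : ZMod m) * (t : ZMod m) ∈ S k := by
    intro k hcl i t
    induction t with
    | zero => intro x hx; simpa using hx
    | succ t ih =>
      intro x hx
      have h2 := ih (x + (a i : ZMod m)) (hcl i x hx)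
      convert h2 using 1
      push_cast
      ring
  have hsumadd : ∀ k, (∀ (i : Fin n) x, x ∈ S k → x + (a i : ZMod m) ∈ S k) →
      ∀ (w : Fin n → ℕ) (s : Finset (Fin n)) x, x ∈ S k →
        x + ∑ i ∈ s, (a i : ZMod m) * (w i : ZMod m) ∈ S k := by
    intro k hcl w s
    induction s using Finset.induction_on with
    | empty => intro x hx; simpa using hx
    | @insert i s hi ih =>
      intro x hx
      have h2 := ih (x + (a i : ZMod m) * (w i : ZMod m)) (hmul k hcl i (w i) x hx)
      rw [Finset.sum_insert hi, ← add_assoc]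
      exact h2
  have hclosed : ∀ k, S (k + 1) ⊆ S k → S k = Finset.univ := by
    intro k hsub
    have hcl : ∀ (i : Fin n) x, x ∈ S k → x + (a i : ZMod m) ∈ S k :=
      fun i x hx => hsub (hstep k x i hx)
    have hplus1 : ∀ x ∈ S k, x + 1 ∈ S k := by
      intro x hx
      rw [hone]
      exact hsumadd k hcl d Finset.univ x hx
    have hall : ∀ j : ℕ, ((j : ℕ) : ZMod m) ∈ S k := by
      intro j
      induction j with
      | zero => simpa using h0 k
      | succ j ih => push_cast; exact hplus1 _ ih
    apply Finset.eq_univ_iff_forall.mpr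
    intro y
    obtain ⟨j, rfl⟩ := ZMod.natCast_zmod_surjective y
    exact hall j
  have hcard : ∀ k, k + 1 ≤ (S k).card ∨ S k = Finset.univ := by
    intro k
    induction k with
    | zero => exact Or.inl (Finset.card_pos.mpr ⟨0, h0 0⟩)
    | succ k ih =>
      rcases ih with ih | ih
      · by_cases hsub : S (k + 1) ⊆ S k
        · right
          have huniv := hclosed k hsub
          exact Finset.univ_subset_iff.mp (huniv ▸ hSmono k)
        · left
          have hss : S k ⊂ S (k + 1) := ⟨hSmono k, hsub⟩
          have := Finset.card_lt_card hss
          omega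
      · right
        exact Finset.univ_subset_iff.mp (ih ▸ hSmono k)
  have hfinal : S (m - 1) = Finset.univ := by
    rcases hcard (m - 1) with h | h
    · apply Finset.eq_univ_of_card
      have h1 : (S (m - 1)).card ≤ Fintype.card (ZMod m) := Finset.card_le_univ _
      rw [ZMod.card] at h1 ⊢
      omega
    · exact h
  -- the main bound
  have hFmem : ((F : ℕ) : ZMod m) ∈ S (m - 1) := hfinal ▸ Finset.mem_univ _
  rw [hmem] at hFmem
  obtain ⟨z, hz1, hz2⟩ := hFmem
  set t : ℕ := ∑ i, a i * z i with htdef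
  have htz : ((t : ℕ) : ZMod m) = ∑ i, (a i : ZMod m) * (z i : ZMod m) := by
    rw [htdef]; push_cast; rfl
  have hFt : ((F : ℕ) : ZMod m) = ((t : ℕ) : ZMod m) := by rw [hz2, htz]
  have hmod : F ≡ t [MOD m] := (ZMod.natCast_eq_natCast_iff _ _ _).mp hFt
  have htb : t ≤ A * (m - 1) := by
    calc t = ∑ i, a i * z i := htdef
      _ ≤ ∑ i, A * z i := Finset.sum_le_sum (fun i _ => Nat.mul_le_mul_right _ (haA i))
      _ = A * ∑ i, z i := (Finset.mul_sum _ _ _).symm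
      _ ≤ A * (m - 1) := Nat.mul_le_mul_left _ hz1
  have hlt : F < t := by
    by_contra h
    push_neg at h
    obtain ⟨q, hq⟩ := (Nat.modEq_iff_dvd' h).mp hmod.symm
    apply hFrep
    refine ⟨fun j => z j + if j = i0 then q else 0, ?_⟩
    have hsum' : ∑ j, a j * (z j + if j = i0 then q else 0) = t + a i0 * q := by
      simp only [mul_add, Finset.sum_add_distrib, mul_ite, mul_zero,
        Finset.sum_ite_eq', Finset.mem_univ, if_true]
      rfl
    rw [hsum', ← hmdef]
    have hFeq : F = m * q + t := (Nat.sub_eq_iff_eq_add h).mp hq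
    omega
  have hge : F + m ≤ t := by
    obtain ⟨q, hq⟩ := (Nat.modEq_iff_dvd' hlt.le).mp hmod
    have hq1 : 1 ≤ q := by
      rcases Nat.eq_zero_or_pos q with h | h
      · exfalso; rw [h, mul_zero] at hq; omega
      · exact h
    have : m ≤ m * q := Nat.le_mul_of_pos_right _ hq1
    omega
  -- arithmetic wrap-up
  have hAm : m ≤ A := haA i0
  have arith : ∀ M B f : ℕ, 2 ≤ M → 2 ≤ B → f + M ≤ B * (M - 1) →
      f ≤ (M - 1) * (B - 1) - 1 := by
    intro M B f hM hB h
    obtain ⟨M', rfl⟩ : ∃ M', M = M' + 2 := ⟨M - 2, by omega⟩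
    obtain ⟨B', rfl⟩ : ∃ B', B = B' + 2 := ⟨B - 2, by omega⟩
    have h1 : M' + 2 - 1 = M' + 1 := by omega
    have h2 : B' + 2 - 1 = B' + 1 := by omega
    rw [h1] at h ⊢
    rw [h2]
    have e1 : (B' + 2) * (M' + 1) = B' * M' + B' + 2 * M' + 2 := by ring
    have e2 : (M' + 1) * (B' + 1) = B' * M' + M' + B' + 1 := by ring
    rw [e1] at h
    rw [e2]
    generalize B' * M' = p at h ⊢
    omega
  exact arith m A F hm2 (by omega) (by omega)
end

section
/- The integer a1·a2 − a1 − a2 is not representable as a1·x + a2·y with nonnegative integers x, y, for coprime positive integers a1, a2 ≥ 2. -/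
/-- Non-representability half of Sylvester's theorem: `a1·a2 − a1 − a2` is not a nonnegative
integral combination of coprime `a1, a2 ≥ 2`. -/
theorem not_representable_frobenius (a1 a2 : ℕ) (h1 : 2 ≤ a1) (h2 : 2 ≤ a2)
    (hco : Nat.Coprime a1 a2) :
    ¬ ∃ x y : ℕ, a1 * a2 - a1 - a2 = a1 * x + a2 * y := by
  rintro ⟨x, y, hxy⟩
  have hge : a1 + a2 ≤ a1 * a2 := by nlinarith
  have key : a1 * a2 = a1 * (x + 1) + a2 * (y + 1) := by
    rw [Nat.mul_add, Nat.mul_add, mul_one, mul_one]; omega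
  have hdy : a1 ∣ y + 1 := by
    have hd : a1 ∣ a1 * a2 - a1 * (x + 1) :=
      Nat.dvd_sub (Dvd.intro a2 rfl) (Dvd.intro (x + 1) rfl)
    have heq : a1 * a2 - a1 * (x + 1) = a2 * (y + 1) := by omega
    exact hco.dvd_of_dvd_mul_left (heq ▸ hd)
  have hdx : a2 ∣ x + 1 := by
    have hd : a2 ∣ a1 * a2 - a2 * (y + 1) :=
      Nat.dvd_sub (Dvd.intro_left a1 rfl) (Dvd.intro (y + 1) rfl)
    have heq : a1 * a2 - a2 * (y + 1) = a1 * (x + 1) := by omega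
    exact hco.symm.dvd_of_dvd_mul_left (heq ▸ hd)
  have h1' : a1 ≤ y + 1 := Nat.le_of_dvd (by omega) hdy
  have h2' : a2 ≤ x + 1 := Nat.le_of_dvd (by omega) hdx
  nlinarith
end
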